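/- Let D ∈ (0,1), h ∈ SR_{1−D}, and let g and f be defined from h as in the context. Let (l_j)_{j≥1} be a fractal string with l_j ≍ g(j) as j → ∞. Then the packing defect δ(x) = ∑_{j=1}^∞ {l_j x} satisfies δ(x) ≍ f(x) as x → ∞. -/

import Mathlib

open Filter MeasureTheory Metric Set Topology

noncomputable section

/-- Regular variation at `0` of index `ρ`. -/
def RegVaryAtZero (h : ℝ → ℝ) (ρ : ℝ) : Prop :=
  Measurable (fun y : Set.Ioi (0:ℝ) => h y) ∧
    ∀ t : ℝ, 0 < t →
      Tendsto (fun y => h (t * y) / h y) (𝓝[>] (0:ℝ)) (𝓝 (t ^ ρ))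

/-- Smooth variation at `0` of index `ρ`. -/
def SmoothVaryAtZero (h : ℝ → ℝ) (ρ : ℝ) : Prop :=
  RegVaryAtZero h ρ ∧ ∃ y₁ > (0:ℝ), ContDiffOn ℝ 1 h (Set.Ioc 0 y₁)

private lemma auxHRV (D : ℝ) (h : ℝ → ℝ) (hpos : ∀ y > 0, 0 < h y)
    (hRV : ∀ t : ℝ, 0 < t →
      Tendsto (fun y => h (t * y) / h y) (𝓝[>] (0:ℝ)) (𝓝 (t ^ (1 - D))))
    (t : ℝ) (ht : 0 < t) :
    Tendsto (fun y => ((t * y) / h (t * y)) / (y / h y)) (𝓝[>] (0:ℝ)) (𝓝 (t ^ D)) := by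
  have hne : (t : ℝ) ^ (1 - D) ≠ 0 := (Real.rpow_pos_of_pos ht _).ne'
  have key : Tendsto (fun y => t / (h (t * y) / h y)) (𝓝[>] (0:ℝ)) (𝓝 (t / t ^ (1 - D))) :=
    tendsto_const_nhds.div (hRV t ht) hne
  have heq : t / t ^ (1 - D) = t ^ D := by
    have h1 : t ^ (1 - D) = t / t ^ D := by rw [Real.rpow_sub ht, Real.rpow_one]
    have h2 : t ^ D ≠ 0 := (Real.rpow_pos_of_pos ht _).ne'
    rw [h1]
    field_simp
  rw [heq] at key
  refine key.congr' ?_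
  filter_upwards [eventually_mem_nhdsWithin] with y hy
  have hy0 : (0:ℝ) < y := hy
  have h1 : h y ≠ 0 := (hpos y hy0).ne'
  have h2 : h (t * y) ≠ 0 := (hpos _ (mul_pos ht hy0)).ne'
  field_simp

private lemma auxH_event_lt (D : ℝ) (h : ℝ → ℝ) (hpos : ∀ y > 0, 0 < h y)
    (hRV : ∀ t : ℝ, 0 < t →
      Tendsto (fun y => h (t * y) / h y) (𝓝[>] (0:ℝ)) (𝓝 (t ^ (1 - D))))
    (t γ : ℝ) (ht : 0 < t) (hγ : t ^ D < γ) :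
    ∀ᶠ y in 𝓝[>] (0:ℝ), (t * y) / h (t * y) < γ * (y / h y) := by
  have := (auxHRV D h hpos hRV t ht).eventually_lt_const hγ
  filter_upwards [this, eventually_mem_nhdsWithin] with y h1 h2
  have hy0 : (0:ℝ) < y := h2
  have hHy : 0 < y / h y := div_pos hy0 (hpos y hy0)
  exact (div_lt_iff₀ hHy).1 h1

private lemma auxH_event_gt (D : ℝ) (h : ℝ → ℝ) (hpos : ∀ y > 0, 0 < h y)
    (hRV : ∀ t : ℝ, 0 < t →
      Tendsto (fun y => h (t * y) / h y) (𝓝[>] (0:ℝ)) (𝓝 (t ^ (1 - D))))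
    (t γ : ℝ) (ht : 0 < t) (hγ : γ < t ^ D) :
    ∀ᶠ y in 𝓝[>] (0:ℝ), γ * (y / h y) < (t * y) / h (t * y) := by
  have := (auxHRV D h hpos hRV t ht).eventually_const_lt hγ
  filter_upwards [this, eventually_mem_nhdsWithin] with y h1 h2
  have hy0 : (0:ℝ) < y := h2
  have hHy : 0 < y / h y := div_pos hy0 (hpos y hy0)
  exact (lt_div_iff₀ hHy).1 h1

set_option maxHeartbeats 3000000 in
theorem statement16 (D : ℝ) (hD : D ∈ Set.Ioo (0:ℝ) 1)
    (h : ℝ → ℝ) (hpos : ∀ y > 0, 0 < h y) (hsv : SmoothVaryAtZero h (1 - D))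
    (y₀ : ℝ) (hy₀ : 0 < y₀) (hH : StrictMonoOn (fun y => y / h y) (Set.Ioc 0 y₀))
    (g : ℝ → ℝ) (hg : ∀ᶠ x in atTop, g x ∈ Set.Ioc (0:ℝ) y₀ ∧ g x / h (g x) = 1 / x)
    (l : ℕ → ℝ) (hlpos : ∀ j, 0 < l j) (hlmono : Antitone l) (hlsum : Summable l)
    (hsim : ∃ c C : ℝ, 0 < c ∧ 0 < C ∧
      ∀ᶠ j : ℕ in atTop, c * g (j : ℝ) ≤ l j ∧ l j ≤ C * g (j : ℝ)) :
    ∃ c C : ℝ, 0 < c ∧ 0 < C ∧ ∀ᶠ x in atTop,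
      c * (x * h (1 / x)) ≤ (∑' j : ℕ, Int.fract (l j * x)) ∧
        (∑' j : ℕ, Int.fract (l j * x)) ≤ C * (x * h (1 / x)) := by
  obtain ⟨hD0, hD1⟩ := hD
  obtain ⟨c, C0, hc, hC0, hsimE⟩ := hsim
  have hRV := hsv.1.2
  set C : ℝ := max C0 1 with hCdef
  have hC1 : (1:ℝ) ≤ C := le_max_right _ _
  have hC : (0:ℝ) < C := lt_of_lt_of_le one_pos hC1
  have hCD : (0:ℝ) < C ^ D := Real.rpow_pos_of_pos hC D
  -- constants q and a
  have h2inv : (2:ℝ) ^ (-(1/D)) < 1/2 := by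
    have : ((1:ℝ)/2) = (2:ℝ) ^ (-1 : ℝ) := by
      rw [Real.rpow_neg_one]; norm_num
    rw [this]
    apply Real.rpow_lt_rpow_left_iff (by norm_num : (1:ℝ) < 2) |>.2
    have : (1:ℝ) < 1/D := one_lt_one_div hD0 hD1
    linarith
  have h2invpos : (0:ℝ) < (2:ℝ) ^ (-(1/D)) := Real.rpow_pos_of_pos (by norm_num) _
  set q : ℝ := ((2:ℝ) ^ (-(1/D)) + 1/2) / 2 with hqdef
  have hq0 : 0 < q := by positivity
  have hqhalf : q < 1/2 := by rw [hqdef]; linarith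
  have hq1 : q ≤ 1 := by linarith
  have hqD : 1/2 < q ^ D := by
    have h1 : (2:ℝ) ^ (-(1/D)) < q := by rw [hqdef]; linarith
    have h2 : ((2:ℝ) ^ (-(1/D))) ^ D < q ^ D :=
      Real.rpow_lt_rpow (le_of_lt h2invpos) h1 hD0
    have h3 : ((2:ℝ) ^ (-(1/D))) ^ D = 1/2 := by
      rw [← Real.rpow_mul (by norm_num : (0:ℝ) ≤ 2)]
      rw [show -(1/D) * D = -1 by field_simp]
      rw [Real.rpow_neg_one]; norm_num
    linarith
  set a : ℝ := (2:ℝ) ^ (-(2/D)) with hadef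
  have ha0 : 0 < a := Real.rpow_pos_of_pos (by norm_num) _
  have ha1 : a ≤ 1 :=
    Real.rpow_le_one_of_one_le_of_nonpos (by norm_num) (neg_nonpos.2 (by positivity))
  have haD : a ^ D = 1/4 := by
    rw [hadef, ← Real.rpow_mul (by norm_num : (0:ℝ) ≤ 2)]
    rw [show -(2/D) * D = -2 by field_simp]
    rw [show (-2:ℝ) = ((-2:ℤ):ℝ) by norm_num, Real.rpow_intCast]
    norm_num
  have h2q : (0:ℝ) < 1 - 2*q := by linarith
  set K₁ : ℝ := 1/(1 - 2*q) with hK₁def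
  have hK₁ : 0 < K₁ := by positivity
  -- ratio events
  have Eq_low : ∀ᶠ y in 𝓝[>] (0:ℝ), (1/2) * (y / h y) < (q * y) / h (q * y) :=
    auxH_event_gt D h hpos hRV q (1/2) hq0 hqD
  have Ea_up : ∀ᶠ y in 𝓝[>] (0:ℝ), (a * y) / h (a * y) < (1/2) * (y / h y) :=
    auxH_event_lt D h hpos hRV a (1/2) ha0 (by rw [haD]; norm_num)
  have EC_low : ∀ᶠ y in 𝓝[>] (0:ℝ), (C ^ D / 2) * (y / h y) < (C * y) / h (C * y) :=
    auxH_event_gt D h hpos hRV C (C ^ D / 2) hC (by linarith)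
  -- H is eventually small
  have Hsmall : ∀ ε : ℝ, 0 < ε → ∀ᶠ y in 𝓝[>] (0:ℝ), y / h y < ε := by
    intro ε hε
    obtain ⟨x, hx⟩ := (hg.and (eventually_gt_atTop (1/ε))).exists
    obtain ⟨⟨hgx_mem, hgx_eq⟩, hxε⟩ := hx
    have hx0 : 0 < x := lt_trans (by positivity) hxε
    have hgx_lt : g x / h (g x) < ε := by
      rw [hgx_eq]
      rw [div_lt_iff₀ hx0]
      rw [div_lt_iff₀ hε] at hxε
      linarith
    have hIoo : Ioo (0:ℝ) (g x) ∈ 𝓝[>] (0:ℝ) :=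
      Ioo_mem_nhdsGT_of_mem ⟨le_refl 0, hgx_mem.1⟩
    filter_upwards [hIoo] with y hy
    have hy_mem : y ∈ Ioc (0:ℝ) y₀ := ⟨hy.1, le_trans hy.2.le hgx_mem.2⟩
    have : y / h y < g x / h (g x) := hH.lt_iff_lt hy_mem hgx_mem |>.2 hy.2
    linarith
  -- ℕ-indexed facts
  have hgN : ∀ᶠ j : ℕ in atTop,
      g (j:ℝ) ∈ Ioc (0:ℝ) y₀ ∧ g (j:ℝ) / h (g (j:ℝ)) = 1/(j:ℝ) :=
    tendsto_natCast_atTop_atTop.eventually hg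
  have hsimN : ∀ᶠ j : ℕ in atTop, c * g (j:ℝ) ≤ l j ∧ l j ≤ C * g (j:ℝ) := by
    filter_upwards [hsimE, hgN] with j h1 h2
    refine ⟨h1.1, le_trans h1.2 ?_⟩
    exact mul_le_mul_of_nonneg_right (le_max_left _ _) h2.1.1.le
  obtain ⟨Ja, hJa⟩ := eventually_atTop.1 (hgN.and hsimN)
  -- g(j) → 0 along ℕ
  have tendsto_gN : Tendsto (fun j : ℕ => g (j:ℝ)) atTop (𝓝[>] (0:ℝ)) := by
    rw [tendsto_nhdsWithin_iff]
    constructor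
    · refine tendsto_order.2 ⟨fun b hb => ?_, fun b hb => ?_⟩
      · filter_upwards [hgN] with j hj; exact lt_of_lt_of_le hb hj.1.1.le
      · set ε' := min b y₀ with hε'def
        have hε'0 : 0 < ε' := lt_min hb hy₀
        have hε'mem : ε' ∈ Ioc (0:ℝ) y₀ := ⟨hε'0, min_le_right _ _⟩
        have hHε' : 0 < ε' / h ε' := div_pos hε'0 (hpos _ hε'0)
        have hev : ∀ᶠ j : ℕ in atTop, 1/(j:ℝ) < ε' / h ε' := by
          have := tendsto_one_div_atTop_nhds_zero_nat.eventually_lt_const hHε'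
          exact this
        filter_upwards [hgN, hev] with j hj hjlt
        by_contra hcon
        push_neg at hcon
        have hge : ε' ≤ g (j:ℝ) := le_trans (min_le_left _ _) hcon
        have := hH.le_iff_le hε'mem hj.1 |>.2 hge
        rw [hj.2] at this
        linarith
    · filter_upwards [hgN] with j hj; exact hj.1.1
  -- doubling estimates
  have gdouble_up : ∀ᶠ m : ℕ in atTop, g ((2*m : ℕ) : ℝ) ≤ q * g (m:ℝ) := by
    filter_upwards [tendsto_gN.eventually Eq_low, eventually_ge_atTop (max Ja 1)]
      with m hm1 hm2
    have hmJ : Ja ≤ m := le_trans (le_max_left _ _) hm2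
    have hm1' : 1 ≤ m := le_trans (le_max_right _ _) hm2
    obtain ⟨⟨hmem2, heq2⟩, -⟩ := hJa (2*m) (by omega)
    obtain ⟨⟨hmemm, heqm⟩, -⟩ := hJa m hmJ
    have hmpos : (0:ℝ) < (m:ℝ) := by exact_mod_cast hm1'
    have hqm_mem : q * g (m:ℝ) ∈ Ioc (0:ℝ) y₀ :=
      ⟨mul_pos hq0 hmemm.1, le_trans (mul_le_of_le_one_left hmemm.1.le hq1) hmemm.2⟩
    have key : g ((2*m:ℕ):ℝ) / h (g ((2*m:ℕ):ℝ)) < (q * g (m:ℝ)) / h (q * g (m:ℝ)) := by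
      rw [heq2]
      calc 1/((2*m:ℕ):ℝ) = (1/2) * (1/(m:ℝ)) := by push_cast; ring
        _ = (1/2) * (g (m:ℝ) / h (g (m:ℝ))) := by rw [heqm]
        _ < (q * g (m:ℝ)) / h (q * g (m:ℝ)) := hm1
    exact (hH.lt_iff_lt hmem2 hqm_mem |>.1 key).le
  have gdouble_low : ∀ᶠ m : ℕ in atTop, a * g (m:ℝ) ≤ g ((2*m : ℕ) : ℝ) := by
    filter_upwards [tendsto_gN.eventually Ea_up, eventually_ge_atTop (max Ja 1)]
      with m hm1 hm2
    have hmJ : Ja ≤ m := le_trans (le_max_left _ _) hm2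
    have hm1' : 1 ≤ m := le_trans (le_max_right _ _) hm2
    obtain ⟨⟨hmem2, heq2⟩, -⟩ := hJa (2*m) (by omega)
    obtain ⟨⟨hmemm, heqm⟩, -⟩ := hJa m hmJ
    have ham_mem : a * g (m:ℝ) ∈ Ioc (0:ℝ) y₀ :=
      ⟨mul_pos ha0 hmemm.1, le_trans (mul_le_of_le_one_left hmemm.1.le ha1) hmemm.2⟩
    have key : (a * g (m:ℝ)) / h (a * g (m:ℝ)) < g ((2*m:ℕ):ℝ) / h (g ((2*m:ℕ):ℝ)) := by
      rw [heq2]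
      calc (a * g (m:ℝ)) / h (a * g (m:ℝ)) < (1/2) * (g (m:ℝ) / h (g (m:ℝ))) := hm1
        _ = (1/2) * (1/(m:ℝ)) := by rw [heqm]
        _ = 1/((2*m:ℕ):ℝ) := by push_cast; ring
    exact (hH.lt_iff_lt ham_mem hmem2 |>.1 key).le
  obtain ⟨Jb, hJb⟩ := eventually_atTop.1 (gdouble_up.and gdouble_low)
  set M : ℕ := max (max Ja Jb) 1 with hMdef
  have hM1 : 1 ≤ M := le_max_right _ _
  have hMa : ∀ j : ℕ, M ≤ j →
      (g (j:ℝ) ∈ Ioc (0:ℝ) y₀ ∧ g (j:ℝ) / h (g (j:ℝ)) = 1/(j:ℝ)) ∧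
        (c * g (j:ℝ) ≤ l j ∧ l j ≤ C * g (j:ℝ)) :=
    fun j hj => hJa j (le_trans (le_trans (le_max_left _ _) (le_max_left _ _)) hj)
  have hMb : ∀ j : ℕ, M ≤ j →
      g ((2*j:ℕ):ℝ) ≤ q * g (j:ℝ) ∧ a * g (j:ℝ) ≤ g ((2*j:ℕ):ℝ) :=
    fun j hj => hJb j (le_trans (le_trans (le_max_right _ _) (le_max_left _ _)) hj)
  -- monotonicity of g on integers ≥ M
  have gmono : ∀ m n : ℕ, M ≤ m → m ≤ n → g (n:ℝ) ≤ g (m:ℝ) := by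
    intro m n hm hmn
    have hm' := (hMa m hm).1
    have hn' := (hMa n (le_trans hm hmn)).1
    refine hH.le_iff_le hn'.1 hm'.1 |>.1 ?_
    rw [hn'.2, hm'.2]
    have hmpos : (0:ℝ) < (m:ℝ) := by exact_mod_cast lt_of_lt_of_le hM1 hm
    exact one_div_le_one_div_of_le hmpos (by exact_mod_cast hmn)
  -- summability of g-tails
  have sg : ∀ N : ℕ, M ≤ N → Summable (fun i : ℕ => g ((i + N : ℕ) : ℝ)) := by
    intro N hN
    refine Summable.of_nonneg_of_le
      (fun i => ((hMa (i+N) (by omega)).1.1.1.le))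
      (fun i => ?_) (((summable_nat_add_iff N).2 hlsum).mul_left (1/c))
    have h1 := (hMa (i+N) (by omega)).2.1
    rw [one_div, ← div_eq_inv_mul, le_div_iff₀ hc]
    linarith
  have Tnonneg : ∀ N : ℕ, M ≤ N → 0 ≤ ∑' i : ℕ, g ((i + N : ℕ) : ℝ) := by
    intro N hN
    exact tsum_nonneg fun i => (hMa (i+N) (by omega)).1.1.1.le
  -- doubling of tails
  have Tdouble : ∀ N : ℕ, M ≤ N →
      (∑' i : ℕ, g ((i + 2*N : ℕ) : ℝ)) ≤ (2*q) * ∑' i : ℕ, g ((i + N : ℕ) : ℝ) := by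
    intro N hN
    have hs2 : Summable (fun i : ℕ => g ((i + 2*N : ℕ) : ℝ)) := sg (2*N) (by omega)
    have hsN : Summable (fun i : ℕ => g ((i + N : ℕ) : ℝ)) := sg N hN
    have hinj2 : Function.Injective (fun i : ℕ => 2*i) := fun x y hxy => by
      simp only at hxy; omega
    have hinj2' : Function.Injective (fun i : ℕ => 2*i+1) := fun x y hxy => by
      simp only at hxy; omega
    have he : Summable (fun i : ℕ => g ((2*i + 2*N : ℕ) : ℝ)) := hs2.comp_injective hinj2
    have ho : Summable (fun i : ℕ => g ((2*i+1 + 2*N : ℕ) : ℝ)) := hs2.comp_injective hinj2'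
    have hsplit := tsum_even_add_odd (f := fun i : ℕ => g ((i + 2*N : ℕ) : ℝ)) he ho
    have e_le : (∑' i : ℕ, g ((2*i + 2*N : ℕ) : ℝ)) ≤ ∑' i : ℕ, q * g ((i + N : ℕ) : ℝ) := by
      refine Summable.tsum_le_tsum (fun i => ?_) he (hsN.mul_left q)
      have := (hMb (i+N) (by omega)).1
      rw [show (2*(i+N) : ℕ) = 2*i + 2*N by ring] at this
      exact this
    have o_le : (∑' i : ℕ, g ((2*i+1 + 2*N : ℕ) : ℝ)) ≤ ∑' i : ℕ, q * g ((i + N : ℕ) : ℝ) := by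
      refine Summable.tsum_le_tsum (fun i => ?_) ho (hsN.mul_left q)
      have h1 := (hMb (i+N) (by omega)).1
      have h2 : g ((2*i+1 + 2*N : ℕ) : ℝ) ≤ g ((2*(i+N) : ℕ) : ℝ) :=
        gmono (2*(i+N)) (2*i+1+2*N) (by omega) (by omega)
      exact le_trans h2 h1
    rw [tsum_mul_left] at e_le o_le
    calc (∑' i : ℕ, g ((i + 2*N : ℕ) : ℝ))
        = (∑' i : ℕ, g ((2*i + 2*N : ℕ) : ℝ)) + ∑' i : ℕ, g ((2*i+1 + 2*N : ℕ) : ℝ) :=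
          hsplit.symm
      _ ≤ q * (∑' i : ℕ, g ((i + N : ℕ) : ℝ)) + q * (∑' i : ℕ, g ((i + N : ℕ) : ℝ)) :=
          add_le_add e_le o_le
      _ = (2*q) * ∑' i : ℕ, g ((i + N : ℕ) : ℝ) := by ring
  -- upper tail bound
  have Tail_up : ∀ N : ℕ, M ≤ N →
      (∑' i : ℕ, g ((i + N : ℕ) : ℝ)) ≤ K₁ * ((N:ℝ) * g (N:ℝ)) := by
    intro N hN
    have hsN : Summable (fun i : ℕ => g ((i + N : ℕ) : ℝ)) := sg N hN
    have hsplit := Summable.sum_add_tsum_nat_add N hsN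
    have hre : (∑' i : ℕ, g ((i + N + N : ℕ) : ℝ)) = ∑' i : ℕ, g ((i + 2*N : ℕ) : ℝ) :=
      tsum_congr fun i => by rw [show i + N + N = i + 2*N by ring]
    have hfin : (∑ i ∈ Finset.range N, g ((i + N : ℕ) : ℝ)) ≤ (N:ℝ) * g (N:ℝ) := by
      calc ∑ i ∈ Finset.range N, g ((i + N : ℕ) : ℝ)
          ≤ ∑ _i ∈ Finset.range N, g (N:ℝ) :=
            Finset.sum_le_sum fun i _ => gmono N (i+N) hN (by omega)
        _ = (N:ℝ) * g (N:ℝ) := by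
            rw [Finset.sum_const, Finset.card_range, nsmul_eq_mul]
    have hT0 : 0 ≤ ∑' i : ℕ, g ((i + N : ℕ) : ℝ) := Tnonneg N hN
    have hkey : (∑' i : ℕ, g ((i + N : ℕ) : ℝ)) ≤
        (N:ℝ) * g (N:ℝ) + (2*q) * ∑' i : ℕ, g ((i + N : ℕ) : ℝ) := by
      have := Tdouble N hN
      calc (∑' i : ℕ, g ((i + N : ℕ) : ℝ))
          = (∑ i ∈ Finset.range N, g ((i + N : ℕ) : ℝ))
              + ∑' i : ℕ, g ((i + N + N : ℕ) : ℝ) := hsplit.symm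
        _ ≤ (N:ℝ) * g (N:ℝ) + (2*q) * ∑' i : ℕ, g ((i + N : ℕ) : ℝ) := by
            rw [hre]; exact add_le_add hfin this
    have h1 : (1 - 2*q) * (∑' i : ℕ, g ((i + N : ℕ) : ℝ)) ≤ (N:ℝ) * g (N:ℝ) := by
      linarith
    calc (∑' i : ℕ, g ((i + N : ℕ) : ℝ))
        = K₁ * ((1 - 2*q) * ∑' i : ℕ, g ((i + N : ℕ) : ℝ)) := by
          rw [hK₁def]; field_simp
      _ ≤ K₁ * ((N:ℝ) * g (N:ℝ)) := mul_le_mul_of_nonneg_left h1 hK₁.le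
  -- lower tail bound
  have Tail_low : ∀ N : ℕ, M ≤ N →
      a * ((N:ℝ) * g (N:ℝ)) ≤ ∑' i : ℕ, g ((i + (N+1) : ℕ) : ℝ) := by
    intro N hN
    have hN1 : 1 ≤ N := le_trans hM1 hN
    have hfin : ((N:ℝ)) * g ((2*N : ℕ) : ℝ) ≤ ∑ i ∈ Finset.range N, g ((i + (N+1) : ℕ) : ℝ) := by
      calc ((N:ℝ)) * g ((2*N : ℕ) : ℝ)
          = ∑ _i ∈ Finset.range N, g ((2*N : ℕ) : ℝ) := by
            rw [Finset.sum_const, Finset.card_range, nsmul_eq_mul]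
        _ ≤ ∑ i ∈ Finset.range N, g ((i + (N+1) : ℕ) : ℝ) := by
            refine Finset.sum_le_sum fun i hi => ?_
            have hi' : i < N := Finset.mem_range.1 hi
            exact gmono (i + (N+1)) (2*N) (by omega) (by omega)
    have hts : (∑ i ∈ Finset.range N, g ((i + (N+1) : ℕ) : ℝ)) ≤
        ∑' i : ℕ, g ((i + (N+1) : ℕ) : ℝ) :=
      Summable.sum_le_tsum _ (fun i _ => (hMa (i+(N+1)) (by omega)).1.1.1.le) (sg (N+1) (by omega))
    have hd : a * g (N:ℝ) ≤ g ((2*N : ℕ) : ℝ) := (hMb N hN).2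
    calc a * ((N:ℝ) * g (N:ℝ)) = (N:ℝ) * (a * g (N:ℝ)) := by ring
      _ ≤ (N:ℝ) * g ((2*N : ℕ) : ℝ) := by
          refine mul_le_mul_of_nonneg_left hd (by positivity)
      _ ≤ ∑ i ∈ Finset.range N, g ((i + (N+1) : ℕ) : ℝ) := hfin
      _ ≤ ∑' i : ℕ, g ((i + (N+1) : ℕ) : ℝ) := hts
  -- x-side filters
  have tendsto_invx : Tendsto (fun x : ℝ => 1/x) atTop (𝓝[>] (0:ℝ)) := by
    rw [tendsto_nhdsWithin_iff]
    constructor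
    · simpa only [one_div] using tendsto_inv_atTop_zero
    · filter_upwards [eventually_gt_atTop (0:ℝ)] with x hx
      exact mem_Ioi.2 (by positivity)
  have tendsto_invCx : Tendsto (fun x : ℝ => 1/(C*x)) atTop (𝓝[>] (0:ℝ)) := by
    have hCx : Tendsto (fun x : ℝ => C*x) atTop atTop :=
      Tendsto.const_mul_atTop hC tendsto_id
    rw [tendsto_nhdsWithin_iff]
    constructor
    · simpa only [one_div, Function.comp_def] using tendsto_inv_atTop_zero.comp hCx
    · filter_upwards [eventually_gt_atTop (0:ℝ)] with x hx
      have hx' : 0 < C*x := mul_pos hC hx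
      exact mem_Ioi.2 (by positivity)
  have Emem : ∀ᶠ y in 𝓝[>] (0:ℝ), y ∈ Ioc (0:ℝ) y₀ :=
    eventually_mem_set.2 (Ioc_mem_nhdsGT_of_mem ⟨le_refl 0, hy₀⟩)
  have hMpos : (0:ℝ) < (M:ℝ) := by exact_mod_cast hM1
  have hMinv : (0:ℝ) < 1/(M:ℝ) := by positivity
  refine ⟨c * (a*a) * C^D / (2*C), 2*(1 + C*K₁), by positivity, by positivity, ?_⟩
  filter_upwards [eventually_ge_atTop (1:ℝ),
    tendsto_invx.eventually Emem,
    tendsto_invx.eventually (Hsmall 1 one_pos),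
    tendsto_invx.eventually (Hsmall (1/(M:ℝ)) hMinv),
    tendsto_invCx.eventually Emem,
    tendsto_invCx.eventually (Hsmall 1 one_pos),
    tendsto_invCx.eventually (Hsmall (1/(M:ℝ)) hMinv),
    tendsto_invCx.eventually Ea_up,
    tendsto_invCx.eventually EC_low]
    with x hx1 humem hu1 huM hvmem hv1 hvM hva hvC
  have hx0 : (0:ℝ) < x := lt_of_lt_of_le one_pos hx1
  have hCx0 : (0:ℝ) < C*x := mul_pos hC hx0
  set u : ℝ := 1/x with hudef
  set v : ℝ := 1/(C*x) with hvdef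
  have hu_pos : 0 < u := by rw [hudef]; positivity
  have hv_pos : 0 < v := by rw [hvdef]; positivity
  have Hu_pos : 0 < u / h u := div_pos hu_pos (hpos u hu_pos)
  have Hv_pos : 0 < v / h v := div_pos hv_pos (hpos v hv_pos)
  set Hu : ℝ := u / h u with hHudef
  set Hv : ℝ := v / h v with hHvdef
  set fx : ℝ := 1/Hu with hfxdef
  set fCx : ℝ := 1/Hv with hfCxdef
  have hfx_pos : 0 < fx := by rw [hfxdef]; positivity
  have hfCx_pos : 0 < fCx := by rw [hfCxdef]; positivity
  have goal_eq : x * h u = fx := by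
    rw [hfxdef, hHudef, hudef]
    have hh : h (1/x) ≠ 0 := (hpos _ (by positivity)).ne'
    field_simp
  have hfx1 : 1 ≤ fx := by
    rw [hfxdef]
    rw [le_div_iff₀ Hu_pos]
    linarith
  have hfCx1 : 1 ≤ fCx := by
    rw [hfCxdef]
    rw [le_div_iff₀ Hv_pos]
    linarith
  have hMfx : (M:ℝ) ≤ fx := by
    have h6 : (M:ℝ) * Hu < 1 := by
      calc (M:ℝ) * Hu < (M:ℝ) * (1/(M:ℝ)) := mul_lt_mul_of_pos_left huM hMpos
        _ = 1 := by field_simp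
    rw [hfxdef, le_div_iff₀ Hu_pos]
    linarith
  have hMfCx : (M:ℝ) ≤ fCx := by
    have h6 : (M:ℝ) * Hv < 1 := by
      calc (M:ℝ) * Hv < (M:ℝ) * (1/(M:ℝ)) := mul_lt_mul_of_pos_left hvM hMpos
        _ = 1 := by field_simp
    rw [hfCxdef, le_div_iff₀ Hv_pos]
    linarith
  -- summability of the fractional-part series
  have fract_le : ∀ j : ℕ, Int.fract (l j * x) ≤ l j * x := by
    intro j
    have h0 : 0 ≤ l j * x := mul_nonneg (hlpos j).le hx0.le
    have hfl : (0:ℝ) ≤ ((⌊l j * x⌋ : ℤ) : ℝ) := by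
      exact_mod_cast Int.floor_nonneg.2 h0
    rw [← Int.self_sub_floor]
    linarith
  have sF : Summable (fun j : ℕ => Int.fract (l j * x)) :=
    Summable.of_nonneg_of_le (fun j => Int.fract_nonneg _) fract_le (hlsum.mul_right x)
  constructor
  · -- LOWER BOUND
    set N' : ℕ := ⌈fCx⌉₊ with hN'def
    have hfCxN' : fCx ≤ (N':ℝ) := Nat.le_ceil fCx
    have hN'M : M ≤ N' := by
      have : (M:ℝ) ≤ (N':ℝ) := le_trans hMfCx hfCxN'
      exact_mod_cast this
    have hN'lt : (N':ℝ) < fCx + 1 := Nat.ceil_lt_add_one hfCx_pos.le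
    have hN'pos : (0:ℝ) < (N':ℝ) := lt_of_lt_of_le hfCx_pos hfCxN'
    have hterm : ∀ i : ℕ, Int.fract (l (i + (N'+1)) * x) = l (i + (N'+1)) * x := by
      intro i
      have hjM : M ≤ i + (N'+1) := by omega
      have hgj := (hMa (i + (N'+1)) hjM).1
      have hlj := (hMa (i + (N'+1)) hjM).2.2
      have hjN' : (N':ℝ) + 1 ≤ ((i + (N'+1) : ℕ):ℝ) := by
        push_cast; linarith [Nat.cast_nonneg (α := ℝ) i]
      have h1 : 1/((i + (N'+1) : ℕ):ℝ) < Hv := by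
        have h2 : fCx < ((i + (N'+1) : ℕ):ℝ) := by linarith
        have h3 : 1/((i + (N'+1) : ℕ):ℝ) < 1/fCx :=
          one_div_lt_one_div_of_lt hfCx_pos h2
        have h4 : 1/fCx = Hv := by rw [hfCxdef, one_div_one_div]
        linarith
      have hgj_lt : g ((i + (N'+1) : ℕ):ℝ) < v := by
        have key : g ((i + (N'+1) : ℕ):ℝ) / h (g ((i + (N'+1) : ℕ):ℝ)) < v / h v := by
          rw [hgj.2]; rw [← hHvdef]; exact h1
        exact (hH.lt_iff_lt hgj.1 hvmem).1 key
      have hlx : l (i + (N'+1)) * x < 1 := by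
        have h5 : l (i + (N'+1)) < 1/x := by
          calc l (i + (N'+1)) ≤ C * g ((i + (N'+1) : ℕ):ℝ) := hlj
            _ < C * v := mul_lt_mul_of_pos_left hgj_lt hC
            _ = 1/x := by rw [hvdef]; field_simp
        calc l (i + (N'+1)) * x < (1/x) * x := mul_lt_mul_of_pos_right h5 hx0
          _ = 1 := by field_simp
      exact Int.fract_eq_self.2 ⟨mul_nonneg (hlpos _).le hx0.le, hlx⟩
    have split' := Summable.sum_add_tsum_nat_add (N'+1) sF
    have hfin' : 0 ≤ ∑ i ∈ Finset.range (N'+1), Int.fract (l i * x) :=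
      Finset.sum_nonneg fun i _ => Int.fract_nonneg _
    have htail' : (∑' i : ℕ, Int.fract (l (i + (N'+1)) * x)) ≤
        ∑' j : ℕ, Int.fract (l j * x) := by
      rw [← split']; linarith
    have hlow1 : (c*x) * (∑' i : ℕ, g ((i + (N'+1) : ℕ):ℝ)) ≤
        ∑' i : ℕ, Int.fract (l (i + (N'+1)) * x) := by
      rw [← tsum_mul_left]
      refine Summable.tsum_le_tsum (fun i => ?_) ((sg (N'+1) (by omega)).mul_left (c*x))
        ((summable_nat_add_iff (N'+1)).2 sF)
      rw [hterm i]
      have h7 := (hMa (i + (N'+1)) (by omega)).2.1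
      calc (c*x) * g ((i + (N'+1) : ℕ):ℝ)
          = (c * g ((i + (N'+1) : ℕ):ℝ)) * x := by ring
        _ ≤ l (i + (N'+1)) * x := mul_le_mul_of_nonneg_right h7 hx0.le
    have hgN'mem := (hMa N' hN'M).1.1
    have hgN'eq := (hMa N' hN'M).1.2
    have hva_mem : a * v ∈ Ioc (0:ℝ) y₀ :=
      ⟨mul_pos ha0 hv_pos, le_trans (mul_le_of_le_one_left hv_pos.le ha1) hvmem.2⟩
    have hgN'_ge : a * v ≤ g ((N':ℕ):ℝ) := by
      have h2 : Hv/2 ≤ 1/((N':ℝ)) := by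
        have h3 : 1/(fCx+1) < 1/(N':ℝ) := one_div_lt_one_div_of_lt hN'pos hN'lt
        have h4 : 1/(2*fCx) ≤ 1/(fCx+1) :=
          one_div_le_one_div_of_le (by positivity) (by linarith)
        have h5 : 1/(2*fCx) = Hv/2 := by
          rw [hfCxdef, show (2:ℝ)*(1/Hv) = 2/Hv by ring, one_div_div]
        linarith
      have key : (a*v)/h (a*v) ≤ g ((N':ℕ):ℝ) / h (g ((N':ℕ):ℝ)) := by
        rw [hgN'eq]
        have h1 : (a*v)/h (a*v) < (1/2) * Hv := hva
        linarith
      exact (hH.le_iff_le hva_mem hgN'mem).1 key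
    have hN'_ge : (C^D/2) * fx ≤ (N':ℝ) := by
      have hCv : C * v = u := by rw [hvdef, hudef]; field_simp
      have h1 : (C^D/2) * Hv < Hu := by
        rw [hCv] at hvC
        rw [hHudef, hHvdef]
        exact hvC
      have h2 : (C^D/2) * fx ≤ fCx := by
        rw [hfxdef, hfCxdef, mul_one_div, div_le_div_iff₀ Hu_pos Hv_pos]
        linarith
      linarith
    have hxv : x * v = 1/C := by rw [hvdef]; field_simp
    rw [goal_eq]
    have s1 : (c*x) * (a * ((N':ℝ) * g ((N':ℕ):ℝ))) ≤
        (c*x) * ∑' i : ℕ, g ((i + (N'+1) : ℕ):ℝ) :=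
      mul_le_mul_of_nonneg_left (Tail_low N' hN'M) (by positivity)
    have s2 : (c*x) * (a * ((N':ℝ) * (a*v))) ≤ (c*x) * (a * ((N':ℝ) * g ((N':ℕ):ℝ))) := by
      have h8 := mul_le_mul_of_nonneg_left hgN'_ge
        (show (0:ℝ) ≤ c*x*a*(N':ℝ) by positivity)
      calc (c*x) * (a * ((N':ℝ) * (a*v))) = (c*x*a*(N':ℝ)) * (a*v) := by ring
        _ ≤ (c*x*a*(N':ℝ)) * g ((N':ℕ):ℝ) := h8
        _ = (c*x) * (a * ((N':ℝ) * g ((N':ℕ):ℝ))) := by ring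
    have s4 : c * (a*a) * C^D/(2*C) * fx ≤ c*(a*a)*(N':ℝ)*(1/C) := by
      have h9 := mul_le_mul_of_nonneg_left hN'_ge
        (show (0:ℝ) ≤ c*(a*a)*(1/C) by positivity)
      calc c * (a*a) * C^D/(2*C) * fx = (c*(a*a)*(1/C)) * ((C^D/2)*fx) := by
            field_simp
        _ ≤ (c*(a*a)*(1/C)) * (N':ℝ) := h9
        _ = c*(a*a)*(N':ℝ)*(1/C) := by ring
    calc c * (a*a) * C^D/(2*C) * fx ≤ c*(a*a)*(N':ℝ)*(1/C) := s4
      _ = (c*x) * (a * ((N':ℝ) * (a*v))) := by rw [← hxv]; ring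
      _ ≤ (c*x) * (a * ((N':ℝ) * g ((N':ℕ):ℝ))) := s2
      _ ≤ (c*x) * ∑' i : ℕ, g ((i + (N'+1) : ℕ):ℝ) := s1
      _ ≤ ∑' i : ℕ, Int.fract (l (i + (N'+1)) * x) := hlow1
      _ ≤ ∑' j : ℕ, Int.fract (l j * x) := htail'
  · -- UPPER BOUND
    set N : ℕ := ⌈fx⌉₊ with hNdef
    have hfxN : fx ≤ (N:ℝ) := Nat.le_ceil fx
    have hNM : M ≤ N := by
      have : (M:ℝ) ≤ (N:ℝ) := le_trans hMfx hfxN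
      exact_mod_cast this
    have hNlt : (N:ℝ) < fx + 1 := Nat.ceil_lt_add_one hfx_pos.le
    have hN2fx : (N:ℝ) ≤ 2*fx := by linarith
    have split := Summable.sum_add_tsum_nat_add N sF
    have hfin_le : (∑ i ∈ Finset.range N, Int.fract (l i * x)) ≤ (N:ℝ) := by
      calc ∑ i ∈ Finset.range N, Int.fract (l i * x)
          ≤ ∑ _i ∈ Finset.range N, (1:ℝ) :=
            Finset.sum_le_sum fun i _ => (Int.fract_lt_one _).le
        _ = (N:ℝ) := by simp
    have hgNmem := (hMa N hNM).1.1
    have hgNeq := (hMa N hNM).1.2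
    have hgN_le_u : g ((N:ℕ):ℝ) ≤ u := by
      have key : g ((N:ℕ):ℝ) / h (g ((N:ℕ):ℝ)) ≤ u / h u := by
        rw [hgNeq, ← hHudef]
        have h1 : 1/(N:ℝ) ≤ 1/fx :=
          one_div_le_one_div_of_le hfx_pos hfxN
        have h2 : 1/fx = Hu := by rw [hfxdef, one_div_one_div]
        linarith
      exact (hH.le_iff_le hgNmem humem).1 key
    have hxgN : x * g ((N:ℕ):ℝ) ≤ 1 := by
      have h3 := mul_le_mul_of_nonneg_left hgN_le_u hx0.le
      have h4 : x * u = 1 := by rw [hudef]; field_simp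
      linarith
    have tail_le : (∑' i : ℕ, Int.fract (l (i + N) * x)) ≤ C * K₁ * (N:ℝ) := by
      have hb : Summable (fun i : ℕ => (C*x) * g ((i + N : ℕ):ℝ)) :=
        (sg N hNM).mul_left _
      have hFt : Summable (fun i : ℕ => Int.fract (l (i+N) * x)) :=
        (summable_nat_add_iff N).2 sF
      have h1 : (∑' i : ℕ, Int.fract (l (i + N) * x)) ≤
          ∑' i : ℕ, (C*x) * g ((i+N:ℕ):ℝ) := by
        refine Summable.tsum_le_tsum (fun i => ?_) hFt hb
        have hl := (hMa (i+N) (by omega)).2.2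
        calc Int.fract (l (i+N) * x) ≤ l (i+N) * x := fract_le _
          _ ≤ (C * g ((i+N:ℕ):ℝ)) * x := mul_le_mul_of_nonneg_right hl hx0.le
          _ = (C*x) * g ((i+N:ℕ):ℝ) := by ring
      rw [tsum_mul_left] at h1
      calc (∑' i : ℕ, Int.fract (l (i + N) * x))
          ≤ (C*x) * ∑' i : ℕ, g ((i+N:ℕ):ℝ) := h1
        _ ≤ (C*x) * (K₁ * ((N:ℝ) * g ((N:ℕ):ℝ))) :=
            mul_le_mul_of_nonneg_left (Tail_up N hNM) (by positivity)
        _ = (C * K₁ * (N:ℝ)) * (x * g ((N:ℕ):ℝ)) := by ring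
        _ ≤ (C * K₁ * (N:ℝ)) * 1 :=
            mul_le_mul_of_nonneg_left hxgN (by positivity)
        _ = C * K₁ * (N:ℝ) := mul_one _
    rw [goal_eq]
    calc (∑' j : ℕ, Int.fract (l j * x))
        = (∑ i ∈ Finset.range N, Int.fract (l i * x))
            + ∑' i : ℕ, Int.fract (l (i + N) * x) := split.symm
      _ ≤ (N:ℝ) + C * K₁ * (N:ℝ) := add_le_add hfin_le tail_le
      _ = (1 + C*K₁) * (N:ℝ) := by ring
      _ ≤ (1 + C*K₁) * (2*fx) :=
          mul_le_mul_of_nonneg_left hN2fx (by positivity)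
      _ = 2*(1 + C*K₁) * fx := by ring
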